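/- If f : M₁ → M₂ and g : M₂ → M₃ are homomorphisms of R-modules such that ker f, coker f, ker g, coker g all have finite length, then ker(g∘f) and coker(g∘f) have finite length and L(coker(g∘f)) − L(ker(g∘f)) = L(coker f) − L(ker f) + L(coker g) − L(ker g). -/

import Mathlib

/-- The length of a module: the supremum of lengths of strictly increasing chains of
submodules, i.e. the Krull dimension of the submodule lattice. -/
noncomputable def moduleLength (R M : Type*) [Ring R] [AddCommGroup M] [Module R M] : ℕ∞ :=
  WithBot.unbotD 0 (Order.krullDim (Submodule R M))

open LinearMap

section Aux

variable {R : Type*} [Ring R]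

lemma moduleLength_eq_iSup (M : Type*) [AddCommGroup M] [Module R M] :
    moduleLength R M = ⨆ p : LTSeries (Submodule R M), (p.length : ℕ∞) := by
  rw [moduleLength, Order.krullDim_eq_iSup_length, WithBot.unbotD_coe]

lemma moduleLength_congr {M N : Type*} [AddCommGroup M] [Module R M]
    [AddCommGroup N] [Module R N] (e : M ≃ₗ[R] N) :
    moduleLength R M = moduleLength R N := by
  unfold moduleLength
  rw [Order.krullDim_eq_of_orderIso (Submodule.orderIsoMapComap e)]

lemma exists_lt_series_prod {β γ : Type*} [PartialOrder β] [PartialOrder γ]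
    (p : LTSeries (β × γ)) : ∃ (q : LTSeries β) (r : LTSeries γ),
      q.last = p.last.1 ∧ r.last = p.last.2 ∧ p.length ≤ q.length + r.length := by
  induction' hn : p.length with n ih generalizing p
  · exact ⟨RelSeries.singleton _ p.last.1, RelSeries.singleton _ p.last.2, rfl, rfl, by simp [hn]⟩
  · obtain ⟨q, r, hq, hr, hlen⟩ := ih p.eraseLast (by simp [RelSeries.eraseLast, hn])
    have hstep : p.eraseLast.last < p.last := p.eraseLast_last_rel_last (by omega)
    have h1 : p.eraseLast.last.1 ≤ p.last.1 := hstep.le.1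
    have h2 : p.eraseLast.last.2 ≤ p.last.2 := hstep.le.2
    rcases h1.lt_or_eq with h1 | h1 <;> rcases h2.lt_or_eq with h2 | h2
    · refine ⟨q.snoc p.last.1 (hq ▸ h1), r.snoc p.last.2 (hr ▸ h2), by simp, by simp, ?_⟩
      simp [RelSeries.snoc, RelSeries.append]; omega
    · refine ⟨q.snoc p.last.1 (hq ▸ h1), r, by simp, hr.trans h2, ?_⟩
      simp [RelSeries.snoc, RelSeries.append]; omega
    · refine ⟨q, r.snoc p.last.2 (hr ▸ h2), hq.trans h1, by simp, ?_⟩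
      simp [RelSeries.snoc, RelSeries.append]; omega
    · exact absurd (Prod.ext h1 h2) (ne_of_lt hstep)

lemma moduleLength_additive {M : Type*} [AddCommGroup M] [Module R M] (N : Submodule R M) :
    moduleLength R M = moduleLength R N + moduleLength R (M ⧸ N) := by
  rw [moduleLength_eq_iSup, moduleLength_eq_iSup, moduleLength_eq_iSup]
  apply le_antisymm
  · apply iSup_le; intro p
    have hmono : StrictMono (fun S : Submodule R M =>
        ((S.comap N.subtype, S.map N.mkQ) : Submodule R N × Submodule R (M ⧸ N))) := by
      intro a b hab
      refine lt_of_le_of_ne ⟨Submodule.comap_mono hab.le, Submodule.map_mono hab.le⟩ ?_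
      intro heq
      have e1 : a ⊓ N = b ⊓ N := by
        have := congrArg (Submodule.map N.subtype) (congrArg Prod.fst heq)
        simpa [Submodule.map_comap_subtype, inf_comm] using this
      have e2 : N ⊔ a = N ⊔ b := by
        have := congrArg (Submodule.comap N.mkQ) (congrArg Prod.snd heq)
        simpa [Submodule.comap_map_mkQ] using this
      exact hab.ne (eq_of_le_of_inf_le_of_sup_le hab.le e1.ge
        (by rw [sup_comm b, ← e2, sup_comm]))
    obtain ⟨q, r, -, -, hlen⟩ := exists_lt_series_prod (p.map _ hmono)
    calc (p.length : ℕ∞) ≤ (q.length : ℕ∞) + r.length := by exact_mod_cast hlen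
      _ ≤ _ := add_le_add (le_iSup (fun p : LTSeries (Submodule R N) => (p.length : ℕ∞)) q)
          (le_iSup (fun p : LTSeries (Submodule R (M ⧸ N)) => (p.length : ℕ∞)) r)
  · apply ENat.iSup_add_iSup_le
    intro q r
    have hqm : Monotone (Submodule.map N.subtype) := fun _ _ h => Submodule.map_mono h
    have hrm : Monotone (Submodule.comap N.mkQ) := fun _ _ h => Submodule.comap_mono h
    have hq : StrictMono (Submodule.map N.subtype) :=
      hqm.strictMono_of_injective (Submodule.map_injective_of_injective N.injective_subtype)
    have hr : StrictMono (Submodule.comap N.mkQ) :=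
      hrm.strictMono_of_injective (Submodule.comap_injective_of_surjective N.mkQ_surjective)
    set q' := q.map _ hq
    set r' := r.map _ hr
    have hle : q'.last ≤ r'.head := by
      calc q'.last = Submodule.map N.subtype q.last := by simp [q']
        _ ≤ N := Submodule.map_subtype_le N q.last
        _ = Submodule.comap N.mkQ ⊥ := by rw [Submodule.comap_bot, Submodule.ker_mkQ]
        _ ≤ r'.head := by
            show Submodule.comap N.mkQ ⊥ ≤ Submodule.comap N.mkQ r.head
            exact Submodule.comap_mono bot_le
    rcases hle.lt_or_eq with hlt | heq
    · let comb : LTSeries (Submodule R M) := (q'.snoc r'.head hlt).smash r' (by simp)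
      have hcl : comb.length = q.length + 0 + 1 + r.length := rfl
      calc (q.length : ℕ∞) + r.length ≤ (comb.length : ℕ∞) := by
            rw [hcl]; exact_mod_cast by omega
        _ ≤ _ := le_iSup (fun p : LTSeries (Submodule R M) => (p.length : ℕ∞)) comb
    · let comb : LTSeries (Submodule R M) := q'.smash r' heq
      have hcl : comb.length = q.length + r.length := rfl
      calc (q.length : ℕ∞) + r.length ≤ (comb.length : ℕ∞) := by
            rw [hcl]; exact_mod_cast le_rfl
        _ ≤ _ := le_iSup (fun p : LTSeries (Submodule R M) => (p.length : ℕ∞)) comb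

lemma moduleLength_eq_ker_add_range {A B : Type*} [AddCommGroup A] [Module R A]
    [AddCommGroup B] [Module R B] (φ : A →ₗ[R] B) :
    moduleLength R A = moduleLength R (ker φ) + moduleLength R (range φ) := by
  rw [moduleLength_additive (ker φ), moduleLength_congr φ.quotKerEquivRange]

lemma isFiniteLength_submodule {M : Type*} [AddCommGroup M] [Module R M]
    (h : IsFiniteLength R M) (S : Submodule R M) : IsFiniteLength R S := by
  rw [isFiniteLength_iff_isNoetherian_isArtinian] at h ⊢
  obtain ⟨h1, h2⟩ := h
  exact ⟨inferInstance, inferInstance⟩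

lemma isFiniteLength_quotient {M : Type*} [AddCommGroup M] [Module R M]
    (h : IsFiniteLength R M) (S : Submodule R M) : IsFiniteLength R (M ⧸ S) := by
  rw [isFiniteLength_iff_isNoetherian_isArtinian] at h ⊢
  obtain ⟨h1, h2⟩ := h
  exact ⟨inferInstance, inferInstance⟩

lemma isFiniteLength_of_ker_range {A B : Type*} [AddCommGroup A] [Module R A]
    [AddCommGroup B] [Module R B] (φ : A →ₗ[R] B)
    (h1 : IsFiniteLength R (ker φ)) (h2 : IsFiniteLength R (range φ)) :
    IsFiniteLength R A := by
  rw [isFiniteLength_iff_isNoetherian_isArtinian] at h1 h2 ⊢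
  obtain ⟨h1n, h1a⟩ := h1
  obtain ⟨h2n, h2a⟩ := h2
  refine ⟨(isNoetherian_iff_submodule_quotient (ker φ)).mpr ⟨h1n, ?_⟩,
          (isArtinian_iff_submodule_quotient (ker φ)).mpr ⟨h1a, ?_⟩⟩
  · exact isNoetherian_of_linearEquiv φ.quotKerEquivRange.symm
  · exact isArtinian_of_linearEquiv φ.quotKerEquivRange.symm

end Aux

lemma isFiniteLength_of_submodule_quotient {R M : Type*} [Ring R] [AddCommGroup M] [Module R M]
    (S : Submodule R M)
    (h1 : IsFiniteLength R S) (h2 : IsFiniteLength R (M ⧸ S)) : IsFiniteLength R M := by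
  rw [isFiniteLength_iff_isNoetherian_isArtinian] at h1 h2 ⊢
  exact ⟨(isNoetherian_iff_submodule_quotient S).mpr ⟨h1.1, h2.1⟩,
    (isArtinian_iff_submodule_quotient S).mpr ⟨h1.2, h2.2⟩⟩

/-- If `ker f`, `coker f`, `ker g`, `coker g` all have finite length, then so do
`ker (g ∘ f)` and `coker (g ∘ f)`, and
`L(coker(g∘f)) − L(ker(g∘f)) = L(coker f) − L(ker f) + L(coker g) − L(ker g)`
(stated additively to avoid subtraction in `ℕ∞`). -/
theorem length_ker_coker_comp {R M₁ M₂ M₃ : Type*} [CommRing R]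
    [AddCommGroup M₁] [AddCommGroup M₂] [AddCommGroup M₃]
    [Module R M₁] [Module R M₂] [Module R M₃]
    (f : M₁ →ₗ[R] M₂) (g : M₂ →ₗ[R] M₃)
    (h₁ : IsFiniteLength R (ker f)) (h₂ : IsFiniteLength R (M₂ ⧸ range f))
    (h₃ : IsFiniteLength R (ker g)) (h₄ : IsFiniteLength R (M₃ ⧸ range g)) :
    IsFiniteLength R (ker (g ∘ₗ f)) ∧ IsFiniteLength R (M₃ ⧸ range (g ∘ₗ f)) ∧
    moduleLength R (M₃ ⧸ range (g ∘ₗ f)) + moduleLength R (ker f) + moduleLength R (ker g)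
      = moduleLength R (ker (g ∘ₗ f)) + moduleLength R (M₂ ⧸ range f)
        + moduleLength R (M₃ ⧸ range g) := by
  set K := ker (g ∘ₗ f) with hK
  set X := range f ⊓ ker g with hX
  set T := Submodule.map (range f).mkQ (ker g) with hT
  set S := range f ⊔ ker g with hS
  set W := Submodule.map (range (g ∘ₗ f)).mkQ (range g) with hW
  have hker_le : ker f ≤ K := ker_le_ker_comp f g
  -- φ₁ : K → M₂
  set φ₁ : K →ₗ[R] M₂ := f.comp K.subtype with hφ₁
  have hkerφ₁ : ker φ₁ = Submodule.comap K.subtype (ker f) := ker_comp _ _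
  have hrangeφ₁ : range φ₁ = X := by
    rw [hφ₁, range_comp, Submodule.range_subtype, hK, ker_comp, Submodule.map_comap_eq, hX]
  have eq_kerφ₁ : moduleLength R (ker φ₁) = moduleLength R (ker f) := by
    rw [hkerφ₁]; exact moduleLength_congr (Submodule.comapSubtypeEquivOfLe hker_le)
  have A : moduleLength R K = moduleLength R (ker f) + moduleLength R X := by
    rw [moduleLength_eq_ker_add_range φ₁, eq_kerφ₁, hrangeφ₁]
  -- φ₂ : ker g → M₂ ⧸ range f
  set φ₂ : ker g →ₗ[R] (M₂ ⧸ range f) := (range f).mkQ.comp (ker g).subtype with hφ₂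
  have hkerφ₂ : ker φ₂ = Submodule.comap (ker g).subtype X := by
    rw [hφ₂, ker_comp, Submodule.ker_mkQ, hX, Submodule.comap_inf,
      Submodule.comap_subtype_self, inf_top_eq]
  have hrangeφ₂ : range φ₂ = T := by
    rw [hφ₂, range_comp, Submodule.range_subtype, hT]
  have eq_kerφ₂ : moduleLength R (ker φ₂) = moduleLength R X := by
    rw [hkerφ₂]; exact moduleLength_congr (Submodule.comapSubtypeEquivOfLe inf_le_right)
  have B : moduleLength R (ker g) = moduleLength R X + moduleLength R T := by
    rw [moduleLength_eq_ker_add_range φ₂, eq_kerφ₂, hrangeφ₂]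
  -- third isomorphism for coker f
  have e₃ : ((M₂ ⧸ range f) ⧸ T) ≃ₗ[R] M₂ ⧸ S :=
    Submodule.quotientQuotientEquivQuotientSup (range f) (ker g)
  have Cq : moduleLength R (M₂ ⧸ range f) = moduleLength R T + moduleLength R (M₂ ⧸ S) := by
    rw [moduleLength_additive T, moduleLength_congr e₃]
  -- ψ and φ₃
  set ψ : M₂ →ₗ[R] (M₃ ⧸ range (g ∘ₗ f)) := (range (g ∘ₗ f)).mkQ.comp g with hψ
  have hkerψ : ker ψ = S := by
    rw [hψ, ker_comp, Submodule.ker_mkQ, range_comp, Submodule.comap_map_eq, hS]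
  set φ₃ : (M₂ ⧸ S) →ₗ[R] (M₃ ⧸ range (g ∘ₗ f)) := S.liftQ ψ hkerψ.ge with hφ₃
  have hinj : Function.Injective φ₃ :=
    ker_eq_bot.mp (Submodule.ker_liftQ_eq_bot _ _ _ hkerψ.le)
  have e₄ : (M₂ ⧸ S) ≃ₗ[R] range φ₃ := LinearEquiv.ofInjective φ₃ hinj
  have hrangeφ₃ : range φ₃ = W := by
    have h5 : range ((range (g ∘ₗ f)).mkQ.comp g)
        = Submodule.map (range (g ∘ₗ f)).mkQ (range g) := range_comp g _
    rw [hφ₃, Submodule.range_liftQ, hψ]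
    exact h5
  have D : moduleLength R (M₂ ⧸ S) = moduleLength R W := by
    rw [moduleLength_congr e₄, hrangeφ₃]
  -- third isomorphism for coker (g ∘ f)
  have hle2 : range (g ∘ₗ f) ≤ range g := by
    rw [range_comp]; exact map_le_range
  have hsup : range (g ∘ₗ f) ⊔ range g = range g := sup_eq_right.mpr hle2
  have e₅ : ((M₃ ⧸ range (g ∘ₗ f)) ⧸ W) ≃ₗ[R] M₃ ⧸ (range (g ∘ₗ f) ⊔ range g) :=
    Submodule.quotientQuotientEquivQuotientSup (range (g ∘ₗ f)) (range g)
  have E : moduleLength R (M₃ ⧸ range (g ∘ₗ f))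
      = moduleLength R W + moduleLength R (M₃ ⧸ range g) := by
    rw [moduleLength_additive W, moduleLength_congr e₅, hsup]
  -- finiteness
  have hXfin : IsFiniteLength R X :=
    (Submodule.comapSubtypeEquivOfLe inf_le_right).isFiniteLength
      (isFiniteLength_submodule h₃ _)
  have hfin_kerφ₁ : IsFiniteLength R (ker φ₁) := by
    rw [hkerφ₁]
    exact (Submodule.comapSubtypeEquivOfLe hker_le).symm.isFiniteLength h₁
  have hfin_rangeφ₁ : IsFiniteLength R (range φ₁) := by rw [hrangeφ₁]; exact hXfin
  have finK : IsFiniteLength R K := isFiniteLength_of_ker_range φ₁ hfin_kerφ₁ hfin_rangeφ₁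
  have hTfin : IsFiniteLength R T := isFiniteLength_submodule h₂ T
  have hQfin : IsFiniteLength R (M₂ ⧸ S) := e₃.isFiniteLength (isFiniteLength_quotient h₂ T)
  have hWfin : IsFiniteLength R W := by
    have := e₄.isFiniteLength hQfin
    rwa [hrangeφ₃] at this
  have hCWfin : IsFiniteLength R ((M₃ ⧸ range (g ∘ₗ f)) ⧸ W) :=
    e₅.symm.isFiniteLength (by rw [hsup]; exact h₄)
  have finC : IsFiniteLength R (M₃ ⧸ range (g ∘ₗ f)) :=
    isFiniteLength_of_submodule_quotient W hWfin hCWfin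
  refine ⟨finK, finC, ?_⟩
  rw [E, A, B, Cq, D]
  ring
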